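/- Let α > β > 0 be reals with α - β + 1 > 0. Then there exists a constant C = max{(1+α-β)^{-2}, (1+α-β)^{-1}} such that for all real τ, 1/|Γ(α-β+1+iτ)| ≤ e^{C τ²} / Γ(α-β+1). -/

import Mathlib

open Finset in
private lemma aux_sum_bound (x : ℝ) (hx : 0 < x) (n : ℕ) :
    ∑ j ∈ range (n + 1), ((x + j) ^ 2)⁻¹ ≤ x⁻¹ ^ 2 + x⁻¹ - (x + n)⁻¹ := by
  induction n with
  | zero => simp [inv_pow]
  | succ n ih =>
    rw [Finset.sum_range_succ]
    have h1 : (0:ℝ) < x + n := by positivity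
    have key : ((x + ((n:ℝ) + 1)) ^ 2)⁻¹ ≤ (x + n)⁻¹ - (x + ((n:ℝ) + 1))⁻¹ := by
      have h2 : (0:ℝ) < x + ((n:ℝ)+1) := by positivity
      have h3 : (x + (n:ℝ))⁻¹ - (x + ((n:ℝ)+1))⁻¹ = ((x + n) * (x + ((n:ℝ)+1)))⁻¹ := by
        field_simp
        ring
      rw [h3]
      apply inv_anti₀ (by positivity)
      nlinarith
    push_cast at key ih ⊢
    linarith

private lemma aux_abs_bound (a τ : ℝ) (ha : 0 < a) :
    ‖(↑a + ↑τ * Complex.I : ℂ)‖ ≤ a * Real.exp (τ ^ 2 / (2 * a ^ 2)) := by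
  rw [Complex.norm_add_mul_I]
  have h1 : a ^ 2 + τ ^ 2 ≤ (a * Real.exp (τ ^ 2 / (2 * a ^ 2))) ^ 2 := by
    have hexp : (1 : ℝ) + τ ^ 2 / a ^ 2 ≤ Real.exp (τ ^ 2 / a ^ 2) := by
      have := Real.add_one_le_exp (τ ^ 2 / a ^ 2); linarith
    have he : Real.exp (τ ^ 2 / (2 * a ^ 2)) ^ 2 = Real.exp (τ ^ 2 / a ^ 2) := by
      rw [← Real.exp_nat_mul]; ring_nf
    have ha2 : (0:ℝ) < a ^ 2 := by positivity
    calc a ^ 2 + τ ^ 2 = a ^ 2 * (1 + τ ^ 2 / a ^ 2) := by field_simp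
      _ ≤ a ^ 2 * Real.exp (τ ^ 2 / a ^ 2) := by nlinarith
      _ = (a * Real.exp (τ ^ 2 / (2 * a ^ 2))) ^ 2 := by rw [mul_pow, he]
  calc Real.sqrt (a ^ 2 + τ ^ 2) ≤ Real.sqrt ((a * Real.exp (τ ^ 2 / (2 * a ^ 2))) ^ 2) :=
        Real.sqrt_le_sqrt h1
    _ = a * Real.exp (τ ^ 2 / (2 * a ^ 2)) := Real.sqrt_sq (by positivity)

theorem inv_gamma_vertical_line_bound (α β : ℝ) (hβ : 0 < β) (hαβ : β < α)
    (h : 0 < α - β + 1) :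
    ∃ C : ℝ, C = max ((1 + α - β) ^ (-2 : ℝ)) ((1 + α - β) ^ (-1 : ℝ)) ∧
      ∀ τ : ℝ,
        1 / ‖Complex.Gamma ((α : ℂ) - β + 1 + τ * Complex.I)‖ ≤
          Real.exp (C * τ ^ 2) / Real.Gamma (α - β + 1) := by
  set x : ℝ := α - β + 1 with hxdef
  have hx1 : 1 < x := by simp only [hxdef]; linarith
  have hx : 0 < x := by linarith
  set C : ℝ := max ((1 + α - β) ^ (-2 : ℝ)) ((1 + α - β) ^ (-1 : ℝ)) with hC
  refine ⟨C, rfl, fun τ => ?_⟩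
  have hxeq : (1 + α - β) = x := by rw [hxdef]; ring
  have e2 : x ^ (-2 : ℝ) = x⁻¹ ^ 2 := by
    rw [show (-2:ℝ) = -((2:ℕ):ℝ) by norm_num, Real.rpow_neg hx.le, Real.rpow_natCast, inv_pow]
  have e1 : x ^ (-1 : ℝ) = x⁻¹ := by
    rw [show (-1:ℝ) = -((1:ℕ):ℝ) by norm_num, Real.rpow_neg hx.le, Real.rpow_natCast, pow_one]
  have hC1 : x⁻¹ ^ 2 ≤ C := by rw [hC, hxeq, e2, e1]; exact le_max_left _ _
  have hC2 : x⁻¹ ≤ C := by rw [hC, hxeq, e2, e1]; exact le_max_right _ _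
  set s : ℂ := (α : ℂ) - β + 1 + τ * Complex.I with hs
  have hsre : s.re = x := by simp [hs, hxdef]
  -- key per-n inequality
  have key : ∀ n : ℕ, Real.GammaSeq x n ≤
      Real.exp (C * τ ^ 2) * ‖Complex.GammaSeq s n‖ := by
    intro n
    rcases Nat.eq_zero_or_pos n with rfl | hn
    · have h0 : Real.GammaSeq x 0 = 0 := by
        simp [Real.GammaSeq, Real.zero_rpow (ne_of_gt hx)]
      rw [h0]; positivity
    · have hnR : (0:ℝ) < (n:ℝ) := by exact_mod_cast hn
      have habs : ‖Complex.GammaSeq s n‖ =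
          (n:ℝ) ^ x * (n.factorial : ℝ) / ∏ j ∈ Finset.range (n + 1), ‖s + j‖ := by
        have hcast : ((n:ℕ):ℂ) = (((n:ℝ)):ℂ) := by norm_cast
        rw [Complex.GammaSeq, norm_div, norm_mul, hcast,
          Complex.norm_cpow_eq_rpow_re_of_pos hnR, hsre, norm_prod]
        norm_num
      have hprodpos : (0:ℝ) < ∏ j ∈ Finset.range (n + 1), (x + j) := by
        apply Finset.prod_pos; intro j _; positivity
      have habspos : ∀ j ∈ Finset.range (n + 1), (0:ℝ) < ‖s + j‖ := by
        intro j _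
        apply norm_pos_iff.mpr
        intro hzero
        have hre : (s + (j:ℂ)).re = x + j := by simp [Complex.add_re, hsre]
        rw [hzero] at hre
        simp at hre
        have : (0:ℝ) < x + j := by positivity
        linarith
      have hprod : ∏ j ∈ Finset.range (n + 1), ‖s + j‖ ≤
          Real.exp (C * τ ^ 2) * ∏ j ∈ Finset.range (n + 1), (x + j) := by
        have step : ∀ j ∈ Finset.range (n + 1), ‖s + j‖ ≤
            (x + j) * Real.exp (τ ^ 2 / (2 * (x + j) ^ 2)) := by
          intro j _
          have hsj : s + j = ((x + j : ℝ) : ℂ) + (τ : ℂ) * Complex.I := by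
            rw [hs, hxdef]; push_cast; ring
          rw [hsj]
          exact aux_abs_bound _ _ (by positivity)
        calc ∏ j ∈ Finset.range (n + 1), ‖s + j‖
            ≤ ∏ j ∈ Finset.range (n + 1), (x + j) * Real.exp (τ ^ 2 / (2 * (x + j) ^ 2)) :=
              Finset.prod_le_prod (fun j hj => (habspos j hj).le) step
          _ = (∏ j ∈ Finset.range (n + 1), (x + j)) *
              Real.exp (∑ j ∈ Finset.range (n + 1), τ ^ 2 / (2 * (x + j) ^ 2)) := by
              rw [Finset.prod_mul_distrib, Real.exp_sum]
          _ ≤ (∏ j ∈ Finset.range (n + 1), (x + j)) * Real.exp (C * τ ^ 2) := by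
              apply mul_le_mul_of_nonneg_left _ hprodpos.le
              apply Real.exp_le_exp.mpr
              have hsum := aux_sum_bound x hx n
              have hrw : ∑ j ∈ Finset.range (n + 1), τ ^ 2 / (2 * (x + j) ^ 2) =
                  (τ ^ 2 / 2) * ∑ j ∈ Finset.range (n + 1), ((x + j) ^ 2)⁻¹ := by
                rw [Finset.mul_sum]
                refine Finset.sum_congr rfl fun j _ => ?_
                have : (0:ℝ) < x + j := by positivity
                field_simp
              rw [hrw]
              have hxn : (0:ℝ) < (x + n)⁻¹ := by positivity
              have h2C : x⁻¹ ^ 2 + x⁻¹ ≤ 2 * C := by linarith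
              calc (τ ^ 2 / 2) * ∑ j ∈ Finset.range (n + 1), ((x + j) ^ 2)⁻¹
                  ≤ (τ ^ 2 / 2) * (2 * C) := by
                    apply mul_le_mul_of_nonneg_left _ (by positivity)
                    linarith
                _ = C * τ ^ 2 := by ring
          _ = Real.exp (C * τ ^ 2) * ∏ j ∈ Finset.range (n + 1), (x + j) := mul_comm _ _
      have hQpos : (0:ℝ) < ∏ j ∈ Finset.range (n + 1), ‖s + j‖ :=
        Finset.prod_pos habspos
      have hapos : (0:ℝ) < (n:ℝ) ^ x * (n.factorial : ℝ) := by positivity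
      rw [Real.GammaSeq, habs, ← mul_div_assoc, div_le_div_iff₀ hprodpos hQpos]
      nlinarith [mul_le_mul_of_nonneg_left hprod hapos.le]
  -- take limits
  have hL1 := Real.GammaSeq_tendsto_Gamma x
  have hL2 : Filter.Tendsto (fun n => Real.exp (C * τ ^ 2) * ‖Complex.GammaSeq s n‖)
      Filter.atTop (nhds (Real.exp (C * τ ^ 2) * ‖Complex.Gamma s‖)) :=
    ((continuous_norm.tendsto _).comp (Complex.GammaSeq_tendsto_Gamma s)).const_mul _
  have hmain : Real.Gamma x ≤ Real.exp (C * τ ^ 2) * ‖Complex.Gamma s‖ :=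
    le_of_tendsto_of_tendsto' hL1 hL2 key
  have hG : 0 < Real.Gamma x := Real.Gamma_pos_of_pos hx
  have hGs : 0 < ‖Complex.Gamma s‖ :=
    norm_pos_iff.mpr (Complex.Gamma_ne_zero_of_re_pos (by rw [hsre]; exact hx))
  rw [div_le_div_iff₀ hGs hG]
  linarith
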